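/- arXiv:2401.05228 — 9 statements merged into one kernel-verified Lean document; each statement's English description precedes it below -/
import Mathlib

section
/- Let f : Γ → Γ' be a finite morphism of metrised graphs and let d : V(Γ) → ℤ be such that f is harmonic with local degrees d. Define f^* : C₁(Γ',ℝ) → C₁(Γ,ℝ) by (f^*y)(e) = d_e(f)·y(f(e)). Then: (a) f^* maps H₁(Γ',ℝ) into H₁(Γ,ℝ); (b) f^* is adjoint to the pushforward f_* with respect to the intersection length pairings, i.e. ⟨f^*y, x⟩_Γ = ⟨y, f_*x⟩_{Γ'} for all y ∈ H₁(Γ',ℝ) and x ∈ H₁(Γ,ℝ); (c) if y takes integer values on all edges, then so does f^*y. -/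
open Finset

/-- A metrised graph: finite sets of vertices and oriented edges, a source map,
a fixed-point-free involution on edges, and a positive length function invariant
under the involution. -/
structure MetrisedGraph (V E : Type) where
  src : E → V
  inv : E → E
  inv_inv : ∀ e, inv (inv e) = e
  inv_ne : ∀ e, inv e ≠ e
  len : E → ℝ
  len_pos : ∀ e, 0 < len e
  len_inv : ∀ e, len (inv e) = len e

/-- A finite morphism of metrised graphs: maps on vertices and edges commuting with
source and inversion, such that each edge has an integer dilation factor
`degE e = len (onE e) / len e > 0`. -/
structure MetrisedGraph.FiniteMorphism {V E V' E' : Type}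
    (G : MetrisedGraph V E) (G' : MetrisedGraph V' E') where
  onV : V → V'
  onE : E → E'
  src_comm : ∀ e, onV (G.src e) = G'.src (onE e)
  inv_comm : ∀ e, onE (G.inv e) = G'.inv (onE e)
  degE : E → ℤ
  degE_pos : ∀ e, 0 < degE e
  degE_spec : ∀ e, G'.len (onE e) = (degE e : ℝ) * G.len e

/-- A 1-cycle on a metrised graph: an antisymmetric real function on oriented edges
with vanishing boundary at every vertex.  These are exactly the elements of H₁(Γ,ℝ). -/
def MetrisedGraph.IsOneCycle {V E : Type} [Fintype E] [DecidableEq V]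
    (G : MetrisedGraph V E) (x : E → ℝ) : Prop :=
  (∀ e, x (G.inv e) = - x e) ∧
  (∀ v : V, ∑ e ∈ univ.filter (fun e => G.src e = v), x e = 0)

/-- The intersection length pairing `⟨x, y⟩ = (1/2) Σ_e len(e)·x(e)·y(e)` on 1-chains. -/
noncomputable def MetrisedGraph.pairing {V E : Type} [Fintype E]
    (G : MetrisedGraph V E) (x y : E → ℝ) : ℝ :=
  (1/2) * ∑ e : E, G.len e * x e * y e

/-- Pushforward of 1-chains along a finite morphism. -/
noncomputable def MetrisedGraph.FiniteMorphism.pushforward {V E V' E' : Type} [Fintype E] [DecidableEq E']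
    {G : MetrisedGraph V E} {G' : MetrisedGraph V' E'}
    (f : G.FiniteMorphism G') (x : E → ℝ) : E' → ℝ :=
  fun e' => ∑ e ∈ univ.filter (fun e => f.onE e = e'), x e

/-- Pullback of 1-chains along a finite morphism: `(f^* y)(e) = d_e(f) · y(f(e))`. -/
noncomputable def MetrisedGraph.FiniteMorphism.pullback {V E V' E' : Type}
    {G : MetrisedGraph V E} {G' : MetrisedGraph V' E'}
    (f : G.FiniteMorphism G') (y : E' → ℝ) : E → ℝ :=
  fun e => (f.degE e : ℝ) * y (f.onE e)

/-- `f` is harmonic with local degrees `d : V → ℤ`: for every vertex `v` and every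
edge `e'` out of `f(v)`, the sum of `d_e(f)` over edges `e` out of `v` with `f(e) = e'`
equals `d v`. -/
def MetrisedGraph.FiniteMorphism.IsHarmonic {V E V' E' : Type}
    [Fintype E] [DecidableEq V] [DecidableEq E']
    {G : MetrisedGraph V E} {G' : MetrisedGraph V' E'}
    (f : G.FiniteMorphism G') (d : V → ℤ) : Prop :=
  ∀ (v : V) (e' : E'), G'.src e' = f.onV v →
    ∑ e ∈ univ.filter (fun e => G.src e = v ∧ f.onE e = e'), f.degE e = d v

/-- `f` is harmonic of degree `n` with local degrees `d`: harmonic, surjective on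
vertices and on edges, and `Σ_{f(v) = v'} d v = n` for every vertex `v'`. -/
def MetrisedGraph.FiniteMorphism.IsHarmonicOfDegree {V E V' E' : Type}
    [Fintype V] [Fintype E] [DecidableEq V] [DecidableEq V'] [DecidableEq E']
    {G : MetrisedGraph V E} {G' : MetrisedGraph V' E'}
    (f : G.FiniteMorphism G') (d : V → ℤ) (n : ℤ) : Prop :=
  f.IsHarmonic d ∧ Function.Surjective f.onV ∧ Function.Surjective f.onE ∧
    ∀ v' : V', ∑ v ∈ univ.filter (fun v => f.onV v = v'), d v = n

/-- Proposition (pullback formula): if `f : Γ → Γ'` is a finite morphism of metrised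
graphs, harmonic with local degrees `d`, then the pullback
`(f^* y)(e) = d_e(f)·y(f(e))` (a) maps H₁(Γ',ℝ) into H₁(Γ,ℝ); (b) is adjoint to the
pushforward with respect to the intersection length pairings; and (c) preserves
integrality of edge values. -/
theorem pullback_homology_adjoint_integral
    {V E V' E' : Type} [Fintype V] [Fintype E] [Fintype V'] [Fintype E']
    [DecidableEq V] [DecidableEq E] [DecidableEq V'] [DecidableEq E']
    (G : MetrisedGraph V E) (G' : MetrisedGraph V' E')
    (f : G.FiniteMorphism G') (d : V → ℤ) (hf : f.IsHarmonic d) :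
    (∀ y : E' → ℝ, G'.IsOneCycle y → G.IsOneCycle (f.pullback y)) ∧
    (∀ y : E' → ℝ, ∀ x : E → ℝ, G'.IsOneCycle y → G.IsOneCycle x →
      G.pairing (f.pullback y) x = G'.pairing y (f.pushforward x)) ∧
    (∀ y : E' → ℝ, (∀ e' : E', ∃ m : ℤ, y e' = m) →
      ∀ e : E, ∃ m : ℤ, f.pullback y e = m) := by
  have degE_inv : ∀ e, f.degE (G.inv e) = f.degE e := by
    intro e
    have h1 := f.degE_spec (G.inv e)
    rw [f.inv_comm, G'.len_inv, G.len_inv, f.degE_spec e] at h1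
    have h2 : (f.degE e : ℝ) = (f.degE (G.inv e) : ℝ) :=
      mul_right_cancel₀ (G.len_pos e).ne' h1
    exact_mod_cast h2.symm
  refine ⟨?_, ?_, ?_⟩
  · intro y hy
    constructor
    · intro e
      simp only [MetrisedGraph.FiniteMorphism.pullback]
      rw [f.inv_comm, hy.1, degE_inv]; ring
    · intro v
      have key : ∑ e ∈ univ.filter (fun e => G.src e = v), f.pullback y e
          = ∑ e' : E', ∑ e ∈ (univ.filter (fun e => G.src e = v)).filter
              (fun e => f.onE e = e'), f.pullback y e :=
        (Finset.sum_fiberwise_of_maps_to (fun x _ => mem_univ (f.onE x)) _).symm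
      rw [key]
      simp only [Finset.filter_filter]
      have step : ∀ e' : E',
          ∑ e ∈ univ.filter (fun e => G.src e = v ∧ f.onE e = e'), f.pullback y e
          = (if G'.src e' = f.onV v then (d v : ℝ) * y e' else 0) := by
        intro e'
        by_cases h : G'.src e' = f.onV v
        · rw [if_pos h]
          have hcong : ∀ e ∈ univ.filter (fun e => G.src e = v ∧ f.onE e = e'),
              f.pullback y e = (f.degE e : ℝ) * y e' := by
            intro e he
            simp only [mem_filter] at he
            simp [MetrisedGraph.FiniteMorphism.pullback, he.2.2]
          rw [Finset.sum_congr rfl hcong, ← Finset.sum_mul]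
          congr 1
          exact_mod_cast hf v e' h
        · rw [if_neg h]
          apply Finset.sum_eq_zero
          intro e he
          simp only [mem_filter] at he
          exact absurd (by rw [← he.2.2, ← f.src_comm, he.2.1]) h
      rw [Finset.sum_congr rfl (fun e' _ => step e'), ← Finset.sum_filter,
        ← Finset.mul_sum, hy.2 (f.onV v), mul_zero]
  · intro y x _ _
    unfold MetrisedGraph.pairing MetrisedGraph.FiniteMorphism.pushforward
      MetrisedGraph.FiniteMorphism.pullback
    congr 1
    have h1 : ∑ e : E, G.len e * ((f.degE e : ℝ) * y (f.onE e)) * x e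
        = ∑ e : E, G'.len (f.onE e) * y (f.onE e) * x e := by
      apply Finset.sum_congr rfl; intro e _; rw [f.degE_spec]; ring
    rw [h1, ← Finset.sum_fiberwise_of_maps_to (fun e _ => Finset.mem_univ (f.onE e))
      (fun e => G'.len (f.onE e) * y (f.onE e) * x e)]
    apply Finset.sum_congr rfl; intro e' _
    rw [Finset.mul_sum]
    apply Finset.sum_congr rfl; intro e he
    rw [(Finset.mem_filter.1 he).2]
  · intro y hy e
    obtain ⟨m, hm⟩ := hy (f.onE e)
    exact ⟨f.degE e * m, by simp [MetrisedGraph.FiniteMorphism.pullback, hm]⟩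
end

section
/- Let f : Γ → Γ' be a finite morphism of metrised graphs that is harmonic of degree n with local degrees d : V(Γ) → ℤ. Then for every γ ∈ H₁(Γ,ℝ), the pushforward f_*γ lies in H₁(Γ',ℝ) and satisfies ⟨f_*γ, f_*γ⟩_{Γ'} ≤ n·⟨γ, γ⟩_Γ. In other words, the pushforward on first homology has operator norm at most √n with respect to the intersection length pairings. -/
open Finset

/-- If `f : Γ → Γ'` is a finite morphism of metrised graphs, harmonic of degree `n`
with local degrees `d`, then for every `γ ∈ H₁(Γ,ℝ)` the pushforward `f_* γ` lies in
`H₁(Γ',ℝ)` and satisfies `⟨f_*γ, f_*γ⟩ ≤ n·⟨γ, γ⟩`, i.e. the pushforward on first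
homology has operator norm at most `√n`. -/
theorem pushforward_norm_le
    {V E V' E' : Type} [Fintype V] [Fintype E] [Fintype V'] [Fintype E']
    [DecidableEq V] [DecidableEq E] [DecidableEq V'] [DecidableEq E']
    (G : MetrisedGraph V E) (G' : MetrisedGraph V' E')
    (f : G.FiniteMorphism G') (d : V → ℤ) (n : ℤ)
    (hf : f.IsHarmonicOfDegree d n) :
    ∀ γ : E → ℝ, G.IsOneCycle γ →
      G'.IsOneCycle (f.pushforward γ) ∧
      G'.pairing (f.pushforward γ) (f.pushforward γ) ≤ (n : ℝ) * G.pairing γ γ := by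
  obtain ⟨hharm, hsurjV, hsurjE, hdeg⟩ := hf
  intro γ hγ
  obtain ⟨hγinv, hγbd⟩ := hγ
  -- sum of local degrees over a fiber of an edge equals n
  have hfib : ∀ e' : E', ∑ e ∈ univ.filter (fun e => f.onE e = e'), f.degE e = n := by
    intro e'
    rw [← Finset.sum_fiberwise_of_maps_to
      (g := G.src) (t := univ.filter (fun v => f.onV v = G'.src e'))
      (fun e he => by
        simp only [mem_filter, mem_univ, true_and] at he ⊢
        rw [← he, ← f.src_comm])]
    rw [← hdeg (G'.src e')]
    refine Finset.sum_congr rfl fun v hv => ?_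
    simp only [mem_filter, mem_univ, true_and] at hv
    rw [Finset.filter_filter]
    rw [← hharm v e' hv.symm]
    refine Finset.sum_congr ?_ fun _ _ => rfl
    ext e; simp [and_comm]
  constructor
  · constructor
    · intro e'
      unfold MetrisedGraph.FiniteMorphism.pushforward
      rw [← Finset.sum_neg_distrib]
      refine Finset.sum_nbij' (fun e => G.inv e) (fun e => G.inv e) ?_ ?_ ?_ ?_ ?_
      · intro e he
        simp only [mem_filter, mem_univ, true_and] at he ⊢
        rw [f.inv_comm, he, G'.inv_inv]
      · intro e he
        simp only [mem_filter, mem_univ, true_and] at he ⊢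
        rw [f.inv_comm, he]
      · intro e _; exact G.inv_inv e
      · intro e _; exact G.inv_inv e
      · intro e _
        simp [hγinv]
    · intro v'
      unfold MetrisedGraph.FiniteMorphism.pushforward
      have h1 : ∑ e' ∈ univ.filter (fun e' => G'.src e' = v'),
          ∑ e ∈ univ.filter (fun e => f.onE e = e'), γ e
          = ∑ e' ∈ univ.filter (fun e' => G'.src e' = v'),
          ∑ e ∈ (univ.filter (fun e => f.onV (G.src e) = v')).filter
              (fun e => f.onE e = e'), γ e := by
        refine Finset.sum_congr rfl fun e' he' => ?_
        simp only [mem_filter, mem_univ, true_and] at he'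
        refine Finset.sum_congr ?_ fun _ _ => rfl
        ext e
        simp only [mem_filter, mem_univ, true_and, filter_filter]
        exact ⟨fun h => ⟨by rw [f.src_comm, h, he'], h⟩, And.right⟩
      rw [h1, Finset.sum_fiberwise_of_maps_to (fun e he => by
          simp only [mem_filter, mem_univ, true_and] at he ⊢
          rw [← f.src_comm]; exact he)]
      rw [← Finset.sum_fiberwise_of_maps_to (g := G.src)
        (t := univ.filter (fun v => f.onV v = v'))
        (fun e he => by simp only [mem_filter, mem_univ, true_and] at he ⊢; exact he)]
      refine Finset.sum_eq_zero fun v hv => ?_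
      simp only [mem_filter, mem_univ, true_and] at hv
      rw [← hγbd v]
      refine Finset.sum_congr ?_ fun _ _ => rfl
      ext e
      simp only [filter_filter, mem_filter, mem_univ, true_and]
      exact ⟨And.right, fun h => ⟨by rw [h, hv], h⟩⟩
  · unfold MetrisedGraph.pairing MetrisedGraph.FiniteMorphism.pushforward
    have key : ∀ e' : E',
        G'.len e' * (∑ e ∈ univ.filter (fun e => f.onE e = e'), γ e)
          * (∑ e ∈ univ.filter (fun e => f.onE e = e'), γ e)
        ≤ (n : ℝ) * ∑ e ∈ univ.filter (fun e => f.onE e = e'), G.len e * γ e * γ e := by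
      intro e'
      set s := univ.filter (fun e => f.onE e = e') with hs
      have hdpos : ∀ e, (0 : ℝ) < (f.degE e : ℝ) := fun e => by
        exact_mod_cast f.degE_pos e
      have hcs : (∑ e ∈ s, γ e) ^ 2
          ≤ (∑ e ∈ s, (f.degE e : ℝ)) * ∑ e ∈ s, γ e ^ 2 / (f.degE e : ℝ) :=
        Finset.sum_sq_le_sum_mul_sum_of_sq_eq_mul s
          (fun e _ => (hdpos e).le)
          (fun e _ => div_nonneg (sq_nonneg _) (hdpos e).le)
          (fun e _ => (mul_div_cancel₀ _ (hdpos e).ne').symm)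
      have hds : ∑ e ∈ s, ((f.degE e : ℤ) : ℝ) = (n : ℝ) := by exact_mod_cast hfib e'
      have h2 : G'.len e' * ∑ e ∈ s, γ e ^ 2 / (f.degE e : ℝ)
          = ∑ e ∈ s, G.len e * γ e * γ e := by
        rw [Finset.mul_sum]
        refine Finset.sum_congr rfl fun e he => ?_
        simp only [hs, mem_filter, mem_univ, true_and] at he
        have hd := (hdpos e).ne'
        rw [← he, f.degE_spec]
        field_simp
      calc G'.len e' * (∑ e ∈ s, γ e) * (∑ e ∈ s, γ e)
          = G'.len e' * (∑ e ∈ s, γ e) ^ 2 := by ring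
        _ ≤ G'.len e' * ((n : ℝ) * ∑ e ∈ s, γ e ^ 2 / (f.degE e : ℝ)) := by
            rw [hds] at hcs
            exact mul_le_mul_of_nonneg_left hcs (G'.len_pos e').le
        _ = (n : ℝ) * (G'.len e' * ∑ e ∈ s, γ e ^ 2 / (f.degE e : ℝ)) := by ring
        _ = (n : ℝ) * ∑ e ∈ s, G.len e * γ e * γ e := by rw [h2]
    calc (1/2) * ∑ e' : E', G'.len e'
            * (∑ e ∈ univ.filter (fun e => f.onE e = e'), γ e)
            * (∑ e ∈ univ.filter (fun e => f.onE e = e'), γ e)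
        ≤ (1/2) * ∑ e' : E', (n : ℝ)
            * ∑ e ∈ univ.filter (fun e => f.onE e = e'), G.len e * γ e * γ e := by
          refine mul_le_mul_of_nonneg_left (Finset.sum_le_sum fun e' _ => key e') (by norm_num)
      _ = (n : ℝ) * ((1/2) * ∑ e : E, G.len e * γ e * γ e) := by
          rw [← Finset.mul_sum, Finset.sum_fiberwise univ f.onE (fun e => G.len e * γ e * γ e)]
          ring
end

section
/- Let f : Γ → Γ' be a finite morphism of metrised graphs that is harmonic of degree n with local degrees d : V(Γ) → ℤ, and let f^* : C₁(Γ',ℝ) → C₁(Γ,ℝ) be the pullback (f^*y)(e) = d_e(f)·y(f(e)). Then for all γ₁', γ₂' ∈ H₁(Γ',ℝ) one has ⟨f^*γ₁', f^*γ₂'⟩_Γ = n·⟨γ₁', γ₂'⟩_{Γ'}. In particular, f^* has operator norm exactly √n on H₁(Γ',ℝ) with respect to the intersection length pairings. -/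
open Finset

/-- If `f : Γ → Γ'` is a finite morphism of metrised graphs, harmonic of degree `n`
with local degrees `d`, then for all `γ₁', γ₂' ∈ H₁(Γ',ℝ)` one has
`⟨f^*γ₁', f^*γ₂'⟩_Γ = n·⟨γ₁', γ₂'⟩_Γ'`; in particular the pullback has operator norm
exactly `√n` on `H₁(Γ',ℝ)`. -/
theorem pullback_pairing_eq
    {V E V' E' : Type} [Fintype V] [Fintype E] [Fintype V'] [Fintype E']
    [DecidableEq V] [DecidableEq E] [DecidableEq V'] [DecidableEq E']
    (G : MetrisedGraph V E) (G' : MetrisedGraph V' E')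
    (f : G.FiniteMorphism G') (d : V → ℤ) (n : ℤ)
    (hf : f.IsHarmonicOfDegree d n) :
    ∀ γ₁' γ₂' : E' → ℝ, G'.IsOneCycle γ₁' → G'.IsOneCycle γ₂' →
      G.pairing (f.pullback γ₁') (f.pullback γ₂') = (n : ℝ) * G'.pairing γ₁' γ₂' := by
  intro γ₁' γ₂' _ _
  obtain ⟨hharm, _, _, hdeg⟩ := hf
  -- key: for every e', the fiber sum of degE equals n
  have key : ∀ e' : E', ∑ e ∈ univ.filter (fun e => f.onE e = e'), f.degE e = n := by
    intro e'
    rw [← Finset.sum_fiberwise (univ.filter (fun e => f.onE e = e')) G.src f.degE]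
    rw [← hdeg (G'.src e')]
    rw [Finset.sum_congr rfl (fun v _ => by
      rw [Finset.filter_filter])]
    rw [← Finset.sum_filter_add_sum_filter_not univ (fun v => f.onV v = G'.src e')]
    have h0 : ∑ v ∈ univ.filter (fun v => ¬ f.onV v = G'.src e'),
        (∑ e ∈ univ.filter (fun e => f.onE e = e' ∧ G.src e = v), f.degE e) = 0 := by
      apply Finset.sum_eq_zero
      intro v hv
      simp only [Finset.mem_filter] at hv
      apply Finset.sum_eq_zero
      intro e he
      simp only [Finset.mem_filter] at he
      exfalso
      apply hv.2
      rw [← he.2.2, f.src_comm, he.2.1]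
    rw [h0, add_zero]
    apply Finset.sum_congr rfl
    intro v hv
    simp only [Finset.mem_filter] at hv
    rw [← hharm v e' hv.2.symm]
    apply Finset.sum_congr
    · ext e; simp [and_comm]
    · intro _ _; rfl
  unfold MetrisedGraph.pairing MetrisedGraph.FiniteMorphism.pullback
  rw [← Finset.sum_fiberwise univ f.onE
      (fun e => G.len e * ((f.degE e : ℝ) * γ₁' (f.onE e)) * ((f.degE e : ℝ) * γ₂' (f.onE e)))]
  have inner : ∀ e' : E', ∑ e ∈ univ.filter (fun e => f.onE e = e'),
      G.len e * ((f.degE e : ℝ) * γ₁' (f.onE e)) * ((f.degE e : ℝ) * γ₂' (f.onE e))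
      = (n : ℝ) * (G'.len e' * γ₁' e' * γ₂' e') := by
    intro e'
    have : ∀ e ∈ univ.filter (fun e => f.onE e = e'),
      G.len e * ((f.degE e : ℝ) * γ₁' (f.onE e)) * ((f.degE e : ℝ) * γ₂' (f.onE e))
      = (f.degE e : ℝ) * (G'.len e' * γ₁' e' * γ₂' e') := by
      intro e he
      simp only [Finset.mem_filter] at he
      rw [he.2]
      have hl : G'.len e' = (f.degE e : ℝ) * G.len e := by rw [← he.2]; exact f.degE_spec e
      rw [hl]; ring
    rw [Finset.sum_congr rfl this, ← Finset.sum_mul]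
    have hc : ∑ e ∈ univ.filter (fun e => f.onE e = e'), ((f.degE e : ℝ))
        = ((∑ e ∈ univ.filter (fun e => f.onE e = e'), f.degE e : ℤ) : ℝ) := by
      push_cast; ring
    rw [hc, key e']
  rw [Finset.sum_congr rfl (fun e' _ => inner e'), ← Finset.mul_sum]
  ring
end

section
/- Let Γ̃, Γ, Γ' be metrised graphs, let f : Γ̃ → Γ be a finite morphism harmonic of degree d₁ and g : Γ̃ → Γ' a finite morphism harmonic of degree d₂ (with respective local degree functions). Let f^* : H₁(Γ,ℝ) → H₁(Γ̃,ℝ) be the pullback (f^*y)(e) = d_e(f)·y(f(e)) and g_* : H₁(Γ̃,ℝ) → H₁(Γ',ℝ) the pushforward. Then for every γ ∈ H₁(Γ,ℝ) one has ⟨g_*(f^*γ), g_*(f^*γ)⟩_{Γ'} ≤ d₁·d₂·⟨γ, γ⟩_Γ; that is, the composite g_* ∘ f^* has operator norm at most √(d₁·d₂) with respect to the intersection length pairings. -/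
open Finset

/-- Auxiliary: for a morphism harmonic of degree `n`, the sum of local edge degrees
over each edge fiber equals `n`. -/
lemma MetrisedGraph.FiniteMorphism.fiber_degE_sum
    {V E V' E' : Type} [Fintype V] [Fintype E]
    [DecidableEq V] [DecidableEq V'] [DecidableEq E']
    {G : MetrisedGraph V E} {G' : MetrisedGraph V' E'}
    (f : G.FiniteMorphism G') {d : V → ℤ} {n : ℤ}
    (hf : f.IsHarmonicOfDegree d n) (e' : E') :
    ∑ e ∈ univ.filter (fun e => f.onE e = e'), f.degE e = n := by
  obtain ⟨hh, -, -, hd⟩ := hf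
  have step : ∀ v : V, ∑ e ∈ univ.filter (fun e => G.src e = v ∧ f.onE e = e'), f.degE e
      = if f.onV v = G'.src e' then d v else 0 := by
    intro v
    by_cases h : f.onV v = G'.src e'
    · rw [if_pos h]; exact hh v e' h.symm
    · rw [if_neg h]
      apply Finset.sum_eq_zero
      intro e he
      exfalso
      simp only [Finset.mem_filter] at he
      exact h (by rw [← he.2.1, f.src_comm, he.2.2])
  have regroup : ∑ e ∈ univ.filter (fun e => f.onE e = e'), f.degE e
      = ∑ v : V, ∑ e ∈ univ.filter (fun e => G.src e = v ∧ f.onE e = e'), f.degE e := by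
    have h := Finset.sum_fiberwise_eq_sum_filter (univ.filter (fun e => f.onE e = e'))
      univ G.src f.degE
    simp only [Finset.filter_filter, Finset.mem_univ, and_true] at h
    rw [← h]
    exact Finset.sum_congr rfl fun v _ => by
      refine Finset.sum_congr ?_ fun _ _ => rfl
      ext e; simp [and_comm]
  rw [regroup]
  calc ∑ v : V, ∑ e ∈ univ.filter (fun e => G.src e = v ∧ f.onE e = e'), f.degE e
      = ∑ v : V, if f.onV v = G'.src e' then d v else 0 :=
        Finset.sum_congr rfl fun v _ => step v
    _ = ∑ v ∈ univ.filter (fun v => f.onV v = G'.src e'), d v := (Finset.sum_filter _ _).symm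
    _ = n := hd _

/-- Core of the boundedness theorem for correspondences: if `f : Γ̃ → Γ` is harmonic of
degree `d₁` and `g : Γ̃ → Γ'` is harmonic of degree `d₂`, then for every
`γ ∈ H₁(Γ,ℝ)` one has `⟨g_*(f^*γ), g_*(f^*γ)⟩ ≤ d₁·d₂·⟨γ, γ⟩`, i.e. the composite
`g_* ∘ f^*` has operator norm at most `√(d₁·d₂)`. -/
theorem pushforward_pullback_norm_le
    {V₀ E₀ V E V' E' : Type}
    [Fintype V₀] [Fintype E₀] [Fintype V] [Fintype E] [Fintype V'] [Fintype E']
    [DecidableEq V₀] [DecidableEq E₀] [DecidableEq V] [DecidableEq E]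
    [DecidableEq V'] [DecidableEq E']
    (G₀ : MetrisedGraph V₀ E₀) (G : MetrisedGraph V E) (G' : MetrisedGraph V' E')
    (f : G₀.FiniteMorphism G) (g : G₀.FiniteMorphism G')
    (df dg : V₀ → ℤ) (d₁ d₂ : ℤ)
    (hf : f.IsHarmonicOfDegree df d₁) (hg : g.IsHarmonicOfDegree dg d₂) :
    ∀ γ : E → ℝ, G.IsOneCycle γ →
      G'.pairing (g.pushforward (f.pullback γ)) (g.pushforward (f.pullback γ)) ≤
        (d₁ : ℝ) * (d₂ : ℝ) * G.pairing γ γ := by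
  intro γ _
  set x : E₀ → ℝ := f.pullback γ with hx
  -- fiber sums of local degrees
  have fibf : ∀ e : E, ∑ e₀ ∈ univ.filter (fun e₀ => f.onE e₀ = e), f.degE e₀ = d₁ :=
    f.fiber_degE_sum hf
  have fibg : ∀ e' : E', ∑ e₀ ∈ univ.filter (fun e₀ => g.onE e₀ = e'), g.degE e₀ = d₂ :=
    g.fiber_degE_sum hg
  -- Step A: ⟨g_* x, g_* x⟩ ≤ d₂ ⟨x, x⟩ on G₀ via Cauchy–Schwarz on each fiber
  have degg_pos : ∀ e₀ : E₀, (0:ℝ) < (g.degE e₀ : ℝ) := fun e₀ => by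
    exact_mod_cast g.degE_pos e₀
  have stepA : ∑ e' : E', G'.len e' * g.pushforward x e' * g.pushforward x e'
      ≤ (d₂ : ℝ) * ∑ e₀ : E₀, G₀.len e₀ * x e₀ * x e₀ := by
    have key : ∀ e' : E', G'.len e' * g.pushforward x e' * g.pushforward x e'
        ≤ (d₂ : ℝ) * ∑ e₀ ∈ univ.filter (fun e₀ => g.onE e₀ = e'),
            G₀.len e₀ * x e₀ * x e₀ := by
      intro e'
      set s := univ.filter (fun e₀ => g.onE e₀ = e') with hs
      have cs : (∑ e₀ ∈ s, x e₀) ^ 2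
          ≤ (∑ e₀ ∈ s, (g.degE e₀ : ℝ)) * ∑ e₀ ∈ s, x e₀ ^ 2 / (g.degE e₀ : ℝ) := by
        have h := Finset.sum_mul_sq_le_sq_mul_sq s
          (fun e₀ => Real.sqrt (g.degE e₀ : ℝ))
          (fun e₀ => x e₀ / Real.sqrt (g.degE e₀ : ℝ))
        have h1 : ∀ e₀ ∈ s, Real.sqrt (g.degE e₀ : ℝ) *
            (x e₀ / Real.sqrt (g.degE e₀ : ℝ)) = x e₀ := by
          intro e₀ _
          rw [mul_div_cancel₀]
          exact ne_of_gt (Real.sqrt_pos.mpr (degg_pos e₀))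
        have h2 : ∀ e₀ ∈ s, Real.sqrt (g.degE e₀ : ℝ) ^ 2 = (g.degE e₀ : ℝ) := by
          intro e₀ _; exact Real.sq_sqrt (le_of_lt (degg_pos e₀))
        have h3 : ∀ e₀ ∈ s, (x e₀ / Real.sqrt (g.degE e₀ : ℝ)) ^ 2
            = x e₀ ^ 2 / (g.degE e₀ : ℝ) := by
          intro e₀ _
          rw [div_pow, Real.sq_sqrt (le_of_lt (degg_pos e₀))]
        rw [Finset.sum_congr rfl h1, Finset.sum_congr rfl h2, Finset.sum_congr rfl h3] at h
        exact h
      have hlen : (0:ℝ) ≤ G'.len e' := le_of_lt (G'.len_pos e')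
      have hsum : ∑ e₀ ∈ s, (g.degE e₀ : ℝ) = (d₂ : ℝ) := by
        exact_mod_cast fibg e'
      have hpush : g.pushforward x e' = ∑ e₀ ∈ s, x e₀ := rfl
      calc G'.len e' * g.pushforward x e' * g.pushforward x e'
          = G'.len e' * (∑ e₀ ∈ s, x e₀) ^ 2 := by rw [hpush]; ring
        _ ≤ G'.len e' * ((∑ e₀ ∈ s, (g.degE e₀ : ℝ)) * ∑ e₀ ∈ s, x e₀ ^ 2 / (g.degE e₀ : ℝ)) :=
            mul_le_mul_of_nonneg_left cs hlen
        _ = (d₂ : ℝ) * ∑ e₀ ∈ s, G'.len e' * (x e₀ ^ 2 / (g.degE e₀ : ℝ)) := by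
            rw [hsum, ← mul_assoc, mul_comm (G'.len e') (d₂:ℝ), mul_assoc, Finset.mul_sum]
        _ = (d₂ : ℝ) * ∑ e₀ ∈ s, G₀.len e₀ * x e₀ * x e₀ := by
            congr 1
            refine Finset.sum_congr rfl fun e₀ he₀ => ?_
            have heq : g.onE e₀ = e' := (Finset.mem_filter.mp he₀).2
            have hne : (g.degE e₀ : ℝ) ≠ 0 := ne_of_gt (degg_pos e₀)
            rw [← heq, g.degE_spec e₀]
            field_simp
    calc ∑ e' : E', G'.len e' * g.pushforward x e' * g.pushforward x e'
        ≤ ∑ e' : E', (d₂ : ℝ) * ∑ e₀ ∈ univ.filter (fun e₀ => g.onE e₀ = e'),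
            G₀.len e₀ * x e₀ * x e₀ := Finset.sum_le_sum fun e' _ => key e'
      _ = (d₂ : ℝ) * ∑ e' : E', ∑ e₀ ∈ univ.filter (fun e₀ => g.onE e₀ = e'),
            G₀.len e₀ * x e₀ * x e₀ := by rw [Finset.mul_sum]
      _ = (d₂ : ℝ) * ∑ e₀ : E₀, G₀.len e₀ * x e₀ * x e₀ := by
            rw [Finset.sum_fiberwise_of_maps_to (fun e₀ _ => Finset.mem_univ (g.onE e₀))]
  -- Step B: ⟨x, x⟩ = d₁ ⟨γ, γ⟩
  have stepB : ∑ e₀ : E₀, G₀.len e₀ * x e₀ * x e₀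
      = (d₁ : ℝ) * ∑ e : E, G.len e * γ e * γ e := by
    have per : ∀ e₀ : E₀, G₀.len e₀ * x e₀ * x e₀
        = (f.degE e₀ : ℝ) * (G.len (f.onE e₀) * γ (f.onE e₀) * γ (f.onE e₀)) := by
      intro e₀
      have hdpos : (0:ℝ) < (f.degE e₀ : ℝ) := by exact_mod_cast f.degE_pos e₀
      have hlen : G.len (f.onE e₀) = (f.degE e₀ : ℝ) * G₀.len e₀ := f.degE_spec e₀
      simp only [hx, MetrisedGraph.FiniteMorphism.pullback, hlen]
      ring
    calc ∑ e₀ : E₀, G₀.len e₀ * x e₀ * x e₀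
        = ∑ e₀ : E₀, (f.degE e₀ : ℝ) * (G.len (f.onE e₀) * γ (f.onE e₀) * γ (f.onE e₀)) :=
          Finset.sum_congr rfl fun e₀ _ => per e₀
      _ = ∑ e : E, ∑ e₀ ∈ univ.filter (fun e₀ => f.onE e₀ = e),
            (f.degE e₀ : ℝ) * (G.len (f.onE e₀) * γ (f.onE e₀) * γ (f.onE e₀)) := by
          rw [Finset.sum_fiberwise_of_maps_to (fun e₀ _ => Finset.mem_univ (f.onE e₀))]
      _ = ∑ e : E, ∑ e₀ ∈ univ.filter (fun e₀ => f.onE e₀ = e),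
            (f.degE e₀ : ℝ) * (G.len e * γ e * γ e) := by
          refine Finset.sum_congr rfl fun e _ => Finset.sum_congr rfl fun e₀ he₀ => ?_
          rw [(Finset.mem_filter.mp he₀).2]
      _ = ∑ e : E, (∑ e₀ ∈ univ.filter (fun e₀ => f.onE e₀ = e), (f.degE e₀ : ℝ))
            * (G.len e * γ e * γ e) := by
          refine Finset.sum_congr rfl fun e _ => ?_
          rw [Finset.sum_mul]
      _ = ∑ e : E, (d₁ : ℝ) * (G.len e * γ e * γ e) := by
          refine Finset.sum_congr rfl fun e _ => ?_
          congr 1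
          exact_mod_cast fibf e
      _ = (d₁ : ℝ) * ∑ e : E, G.len e * γ e * γ e := by rw [Finset.mul_sum]
  -- combine
  unfold MetrisedGraph.pairing
  calc (1/2 : ℝ) * ∑ e' : E', G'.len e' * g.pushforward x e' * g.pushforward x e'
      ≤ (1/2 : ℝ) * ((d₂ : ℝ) * ∑ e₀ : E₀, G₀.len e₀ * x e₀ * x e₀) :=
        mul_le_mul_of_nonneg_left stepA (by norm_num)
    _ = (d₁ : ℝ) * (d₂ : ℝ) * ((1/2 : ℝ) * ∑ e : E, G.len e * γ e * γ e) := by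
        rw [stepB]; ring
end

section
/- Let m be a natural number, λ : Fin m → ℂ, let C > 0 and d₁, d₂ > 0 be real numbers, and suppose that for every natural number n ≥ 1 the real part of Σᵢ (λ i)ⁿ is at most C·(d₁ⁿ + d₂ⁿ). Then |λ i| ≤ max(d₁, d₂) for every i. -/
open Complex Finset

/-- Recurrence on the torus: powers of unit complex numbers return simultaneously
close to 1, at arbitrarily large exponents. -/
lemma recurrence_lemma (m : ℕ) (z : Fin m → ℂ) (hz : ∀ i, ‖z i‖ = 1)
    (ε : ℝ) (hε : 0 < ε) (N : ℕ) (hN : 1 ≤ N) :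
    ∃ n, N ≤ n ∧ ∀ i, ‖z i ^ n - 1‖ < ε := by
  have hc : IsCompact (Metric.closedBall (0 : Fin m → ℂ) 1) := isCompact_closedBall _ _
  set f : ℕ → (Fin m → ℂ) := fun j i => z i ^ (N * (j + 1)) with hf
  have hmem : ∀ j, f j ∈ Metric.closedBall (0 : Fin m → ℂ) 1 := by
    intro j
    rw [Metric.mem_closedBall, dist_pi_le_iff zero_le_one]
    intro i
    simp [f, Complex.dist_eq, map_pow, hz i]
  obtain ⟨x, -, φ, hφ, hlim⟩ := hc.tendsto_subseq hmem
  rw [Metric.tendsto_atTop] at hlim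
  obtain ⟨J, hJ⟩ := hlim (ε / 2) (by linarith)
  set j1 := φ J with hj1
  set j2 := φ (J + 1) with hj2
  have hjj : j1 < j2 := hφ (Nat.lt_succ_self J)
  have hdist : dist (f j2) (f j1) < ε := by
    calc dist (f j2) (f j1) ≤ dist (f j2) x + dist (f j1) x := dist_triangle_right _ _ _
    _ < ε/2 + ε/2 := add_lt_add (hJ _ (Nat.le_succ J)) (hJ _ le_rfl)
    _ = ε := by ring
  refine ⟨N * (j2 - j1), ?_, ?_⟩
  · calc N = N * 1 := (mul_one N).symm
    _ ≤ N * (j2 - j1) := Nat.mul_le_mul_left N (by omega)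
  · intro i
    have key : z i ^ (N * (j2 + 1)) - z i ^ (N * (j1 + 1))
        = z i ^ (N * (j1 + 1)) * (z i ^ (N * (j2 - j1)) - 1) := by
      have he : j2 + 1 = j1 + 1 + (j2 - j1) := by omega
      rw [mul_sub, mul_one, ← pow_add, ← Nat.mul_add, he]
    have h1 : ‖z i ^ (N * (j2 + 1)) - z i ^ (N * (j1 + 1))‖ < ε := by
      have h2 := dist_le_pi_dist (f j2) (f j1) i
      rw [Complex.dist_eq] at h2
      exact lt_of_le_of_lt h2 hdist
    rwa [key, norm_mul, norm_pow, hz i, one_pow, one_mul] at h1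

/-- Analytic core of the trace bound: if the real parts of the power sums of complex
numbers `λ₁, …, λ_m` are bounded by `C·(d₁ⁿ + d₂ⁿ)` for all `n ≥ 1`, then every
`|λ i|` is at most `max d₁ d₂`. -/
theorem abs_le_max_of_re_powerSum_le
    (m : ℕ) (lam : Fin m → ℂ) (C d₁ d₂ : ℝ)
    (hC : 0 < C) (hd₁ : 0 < d₁) (hd₂ : 0 < d₂)
    (h : ∀ n : ℕ, 1 ≤ n → (∑ i, lam i ^ n).re ≤ C * (d₁ ^ n + d₂ ^ n)) :
    ∀ i, ‖lam i‖ ≤ max d₁ d₂ := by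
  intro i₀
  by_contra hcon
  push_neg at hcon
  set D := max d₁ d₂ with hD
  have hD0 : 0 < D := lt_max_of_lt_left hd₁
  set r := ‖lam i₀‖ with hr
  have hrD : D < r := hcon
  have hr1 : 1 < r / D := (one_lt_div hD0).mpr hrD
  obtain ⟨N₀, hN₀⟩ := pow_unbounded_of_one_lt (4 * C) hr1
  set z : Fin m → ℂ := fun i => if lam i = 0 then 1 else lam i / (‖lam i‖ : ℂ) with hzdef
  have hz : ∀ i, ‖z i‖ = 1 := by
    intro i
    by_cases h0 : lam i = 0
    · simp [hzdef, h0]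
    · have : ‖lam i‖ ≠ 0 := by simpa using h0
      simp [hzdef, h0, norm_div, Complex.norm_real, norm_norm, div_self this]
  have key : ∀ n, 1 ≤ n → (∀ i, ‖z i ^ n - 1‖ < 1/2) →
      ∀ i, (‖lam i‖)^n / 2 ≤ (lam i ^ n).re := by
    intro n hn hzn i
    by_cases h0 : lam i = 0
    · simp [h0, zero_pow (by omega : n ≠ 0)]
    · have habs : (0:ℝ) < ‖lam i‖ := norm_pos_iff.mpr h0
      have hlam : lam i = (‖lam i‖ : ℂ) * z i := by
        rw [hzdef]
        simp only [h0, if_false]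
        rw [mul_div_assoc', mul_div_cancel_left₀]
        exact Complex.ofReal_ne_zero.mpr (by simpa using h0)
      have hre : 1/2 ≤ (z i ^ n).re := by
        have h1 : (1 - z i ^ n).re ≤ ‖1 - z i ^ n‖ := Complex.re_le_norm _
        have h2 : ‖1 - z i ^ n‖ = ‖z i ^ n - 1‖ := by
          exact norm_sub_rev _ _
        have h4 := hzn i
        have h3 : (1 - z i ^ n).re = 1 - (z i ^ n).re := by simp
        linarith
      have hrw : (lam i ^ n).re = (‖lam i‖)^n * (z i ^ n).re := by
        conv_lhs => rw [hlam]
        rw [mul_pow, ← Complex.ofReal_pow, Complex.re_ofReal_mul]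
      rw [hrw]
      have := mul_le_mul_of_nonneg_left hre (le_of_lt (pow_pos habs n))
      linarith
  obtain ⟨n, hnN, hzn⟩ := recurrence_lemma m z hz (1/2) (by norm_num) (max N₀ 1)
    (le_max_right _ _)
  have hn1 : 1 ≤ n := le_trans (le_max_right N₀ 1) hnN
  have hnN₀ : N₀ ≤ n := le_trans (le_max_left N₀ 1) hnN
  have hlow : r ^ n / 2 ≤ (∑ i, lam i ^ n).re := by
    rw [Complex.re_sum]
    calc r ^ n / 2 ≤ (lam i₀ ^ n).re := key n hn1 hzn i₀
    _ ≤ ∑ i, (lam i ^ n).re := Finset.single_le_sum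
        (fun i _ => le_trans (by positivity) (key n hn1 hzn i)) (mem_univ i₀)
  have hup : (∑ i, lam i ^ n).re ≤ 2 * C * D ^ n := by
    have h1 : d₁ ^ n ≤ D ^ n := pow_le_pow_left₀ hd₁.le (le_max_left _ _) n
    have h2 : d₂ ^ n ≤ D ^ n := pow_le_pow_left₀ hd₂.le (le_max_right _ _) n
    calc (∑ i, lam i ^ n).re ≤ C * (d₁ ^ n + d₂ ^ n) := h n hn1
    _ ≤ C * (D ^ n + D ^ n) := by nlinarith
    _ = 2 * C * D ^ n := by ring
  have hpow : 4 * C < (r / D) ^ n :=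
    lt_of_lt_of_le hN₀ (pow_le_pow_right₀ hr1.le hnN₀)
  have hDn : 0 < D ^ n := pow_pos hD0 n
  rw [div_pow, lt_div_iff₀ hDn] at hpow
  nlinarith [hDn]
end

section
/- Let K be a field equipped with a valuation v : K → ℝ ∪ {∞}, let v₂ ≤ v₁ be real numbers, and let a : ℤ → K be a Laurent coefficient sequence on the closed annulus with parameters (v₁, v₂). Then the following are equivalent: (i) a admits a decomposition, i.e. there exist c ∈ K with c ≠ 0, d ∈ ℤ, and a Laurent coefficient sequence g : ℤ → K with v(g_i) + v_k·i > 0 for all i ∈ ℤ and k ∈ {1,2}, such that a_i = c·g_{i−d} for all i ≠ d and a_d = c·(1 + g₀); (ii) for each k ∈ {1,2} there exists an index i_k ∈ ℤ with v(a_{i_k}) + v_k·i_k < v(a_i) + v_k·i for all i ≠ i_k, and moreover i₁ = i₂. Furthermore, when these hold, the decomposition satisfies d = i₁ and c = a_d. -/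
/-- A (rank-one) valuation on a field `K`, valued in `ℝ ∪ {∞}`:
`v x = ∞ ↔ x = 0`, `v (xy) = v x + v y`, and `v (x+y) ≥ min (v x) (v y)`. -/
def IsValuation {K : Type*} [Field K] (v : K → WithTop ℝ) : Prop :=
  (∀ x : K, v x = ⊤ ↔ x = 0) ∧
  (∀ x y : K, v (x * y) = v x + v y) ∧
  (∀ x y : K, min (v x) (v y) ≤ v (x + y))

/-- `a : ℤ → K` is the Laurent coefficient sequence of a rigid analytic function on the
closed annulus with parameters `(v₁, v₂)`: `v(aᵢ) + v₁·i → ∞` as `i → −∞` and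
`v(aᵢ) + v₂·i → ∞` as `i → +∞`. -/
def IsLaurentSeq {K : Type*} [Field K] (v : K → WithTop ℝ) (v₁ v₂ : ℝ) (a : ℤ → K) : Prop :=
  (∀ B : ℝ, ∃ N : ℤ, ∀ i : ℤ, i ≤ N → (B : WithTop ℝ) < v (a i) + ((v₁ * i : ℝ) : WithTop ℝ)) ∧
  (∀ B : ℝ, ∃ N : ℤ, ∀ i : ℤ, N ≤ i → (B : WithTop ℝ) < v (a i) + ((v₂ * i : ℝ) : WithTop ℝ))

/-- A decomposition `(c, d, g)` of a Laurent coefficient sequence `a`, expressing the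
factorisation `h(t) = c·t^d·(1 + g(t))` where `g` has positive valuation at the Gauss
points of both bounding discs. -/
def IsDecomposition {K : Type*} [Field K] (v : K → WithTop ℝ) (v₁ v₂ : ℝ)
    (a : ℤ → K) (c : K) (d : ℤ) (g : ℤ → K) : Prop :=
  c ≠ 0 ∧ IsLaurentSeq v v₁ v₂ g ∧
  (∀ i : ℤ, (0 : WithTop ℝ) < v (g i) + ((v₁ * i : ℝ) : WithTop ℝ)) ∧
  (∀ i : ℤ, (0 : WithTop ℝ) < v (g i) + ((v₂ * i : ℝ) : WithTop ℝ)) ∧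
  (∀ i : ℤ, i ≠ d → a i = c * g (i - d)) ∧
  a d = c * (1 + g 0)

section aux
variable {K : Type*} [Field K] {v : K → WithTop ℝ}

lemma IsValuation.ne_top (hv : IsValuation v) {x : K} (hx : x ≠ 0) : v x ≠ ⊤ :=
  fun h => hx ((hv.1 x).1 h)

lemma IsValuation.val_one (hv : IsValuation v) : v 1 = 0 := by
  have h := hv.2.1 1 1
  rw [one_mul] at h
  have hne : v 1 ≠ ⊤ := hv.ne_top one_ne_zero
  lift v 1 to ℝ using hne with r hr
  have : r = r + r := by exact_mod_cast h
  have : r = 0 := by linarith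
  exact_mod_cast this

lemma IsValuation.val_neg (hv : IsValuation v) (x : K) : v (-x) = v x := by
  have h1 : v ((-1 : K) * (-1)) = v (-1) + v (-1) := hv.2.1 (-1) (-1)
  rw [neg_mul_neg, one_mul, hv.val_one] at h1
  have hne : v (-1 : K) ≠ ⊤ := hv.ne_top (by norm_num)
  lift v (-1 : K) to ℝ using hne with r hr
  have hr0 : r = 0 := by
    have : (0 : ℝ) = r + r := by exact_mod_cast h1
    linarith
  have : v (-x) = v (-1 : K) + v x := by rw [← hv.2.1, neg_one_mul]
  rw [this, ← hr, hr0]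
  simp

lemma IsValuation.val_inv (hv : IsValuation v) {x : K} (hx : x ≠ 0) :
    v x⁻¹ + v x = 0 := by
  have := hv.2.1 x⁻¹ x
  rw [inv_mul_cancel₀ hx, hv.val_one] at this
  exact this.symm

/-- From a decomposition, `v(aᵢ) + w·i` attains a strict minimum at `d`,
for any weight `w` at which `g` has positive valuation. -/
lemma decomp_min (hv : IsValuation v) {v₁ v₂ : ℝ} {a : ℤ → K} {c : K} {d : ℤ} {g : ℤ → K}
    (hd : IsDecomposition v v₁ v₂ a c d g) (w : ℝ)
    (hw : ∀ i : ℤ, (0 : WithTop ℝ) < v (g i) + ((w * i : ℝ) : WithTop ℝ)) :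
    ∀ i : ℤ, i ≠ d →
      v (a d) + ((w * d : ℝ) : WithTop ℝ) < v (a i) + ((w * i : ℝ) : WithTop ℝ) := by
  obtain ⟨hc, _, _, _, heq, hed⟩ := hd
  -- v (g 0) > 0
  have hg0 : (0 : WithTop ℝ) < v (g 0) := by
    have := hw 0
    simpa using this
  -- v (1 + g 0) = 0
  have hone : v (1 + g 0) = 0 := by
    have hle : (0 : WithTop ℝ) ≤ v (1 + g 0) := by
      have := hv.2.2 1 (g 0)
      rw [hv.val_one] at this
      exact le_trans (le_min le_rfl hg0.le) this
    have hge : v (1 + g 0) ≤ 0 := by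
      have h := hv.2.2 (1 + g 0) (-(g 0))
      rw [add_neg_cancel_right, hv.val_one, hv.val_neg] at h
      rcases min_le_iff.1 h with h' | h'
      · exact h'
      · exact absurd h' (not_le.2 hg0)
    exact le_antisymm hge hle
  have hvad : v (a d) = v c := by
    rw [hed, hv.2.1, hone, add_zero]
  intro i hi
  have hai : v (a i) = v c + v (g (i - d)) := by rw [heq i hi, hv.2.1]
  lift v c to ℝ using hv.ne_top hc with rc hrc
  rw [hvad, hai]
  rcases eq_or_ne (v (g (i - d))) ⊤ with htop | hnt
  · rw [htop]
    rw [add_top, top_add]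
    exact lt_of_lt_of_le (WithTop.coe_lt_top _) le_top
  · lift v (g (i - d)) to ℝ using hnt with s hs
    have hpos := hw (i - d)
    rw [← hs] at hpos
    have hpos' : (0 : ℝ) < s + w * ((i : ℝ) - (d : ℝ)) := by
      have : ((0 : ℝ) : WithTop ℝ) < ((s + w * ((i - d : ℤ) : ℝ) : ℝ) : WithTop ℝ) := by
        push_cast at hpos ⊢
        convert hpos using 2
      push_cast at this
      exact_mod_cast this
    have : ((rc + w * d : ℝ) : WithTop ℝ) < ((rc + s + w * i : ℝ) : WithTop ℝ) := by
      exact_mod_cast (by nlinarith : (rc + w * d : ℝ) < rc + s + w * i)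
    push_cast at this ⊢
    convert this using 1 <;> push_cast <;> ring_nf
end aux

section construct
variable {K : Type*} [Field K] {v : K → WithTop ℝ}

lemma construct_decomp (hv : IsValuation v) {v₁ v₂ : ℝ} {a : ℤ → K}
    (ha : IsLaurentSeq v v₁ v₂ a) (i₀ : ℤ)
    (h1 : ∀ i : ℤ, i ≠ i₀ →
      v (a i₀) + ((v₁ * i₀ : ℝ) : WithTop ℝ) < v (a i) + ((v₁ * i : ℝ) : WithTop ℝ))
    (h2 : ∀ i : ℤ, i ≠ i₀ →
      v (a i₀) + ((v₂ * i₀ : ℝ) : WithTop ℝ) < v (a i) + ((v₂ * i : ℝ) : WithTop ℝ)) :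
    ∃ g, IsDecomposition v v₁ v₂ a (a i₀) i₀ g := by
  have ha0 : a i₀ ≠ 0 := by
    intro h0
    have := h1 (i₀ + 1) (by omega)
    rw [h0, (hv.1 0).2 rfl, top_add] at this
    exact absurd this (not_top_lt)
  have hnt : v (a i₀) ≠ ⊤ := hv.ne_top ha0
  obtain ⟨r, hr⟩ := WithTop.ne_top_iff_exists.1 hnt
  have hinv : v (a i₀)⁻¹ = ((-r : ℝ) : WithTop ℝ) := by
    have h := hv.val_inv ha0
    rw [← hr] at h
    have hint : v (a i₀)⁻¹ ≠ ⊤ := hv.ne_top (inv_ne_zero ha0)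
    lift v (a i₀)⁻¹ to ℝ using hint with s hs
    have : s + r = 0 := by exact_mod_cast h
    have : s = -r := by linarith
    exact_mod_cast this
  set g : ℤ → K := fun j => if j = 0 then 0 else (a i₀)⁻¹ * a (j + i₀) with hg
  have hgval : ∀ j : ℤ, j ≠ 0 → v (g j) = ((-r : ℝ) : WithTop ℝ) + v (a (j + i₀)) := by
    intro j hj
    simp only [hg, if_neg hj]
    rw [hv.2.1, hinv]
  -- positivity, generic in the weight
  have key_pos : ∀ (w : ℝ),
      (∀ i : ℤ, i ≠ i₀ →
        v (a i₀) + ((w * i₀ : ℝ) : WithTop ℝ) < v (a i) + ((w * i : ℝ) : WithTop ℝ)) →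
      ∀ j : ℤ, (0 : WithTop ℝ) < v (g j) + ((w * j : ℝ) : WithTop ℝ) := by
    intro w hmin j
    by_cases hj : j = 0
    · subst hj
      simp only [hg, if_pos rfl]
      rw [(hv.1 0).2 rfl, top_add]
      exact lt_of_lt_of_le (WithTop.coe_lt_top 0) le_top
    · rw [hgval j hj]
      have hm := hmin (j + i₀) (by omega)
      rcases eq_or_ne (a (j + i₀)) 0 with h0 | h0
      · rw [h0, (hv.1 0).2 rfl, add_top, top_add]
        exact lt_of_lt_of_le (WithTop.coe_lt_top 0) le_top
      · lift v (a (j + i₀)) to ℝ using hv.ne_top h0 with s hs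
        rw [← hr] at hm
        have hm' : (r + w * (i₀ : ℝ) : ℝ) < s + w * ((j : ℝ) + (i₀ : ℝ)) := by
          have : ((r + w * (i₀ : ℝ) : ℝ) : WithTop ℝ)
              < ((s + w * ((j + i₀ : ℤ) : ℝ) : ℝ) : WithTop ℝ) := by
            push_cast
            push_cast at hm
            convert hm using 2
          push_cast at this
          exact_mod_cast this
        have : ((0 : ℝ) : WithTop ℝ) < ((-r + s + w * (j : ℝ) : ℝ) : WithTop ℝ) := by
          exact_mod_cast (by nlinarith : (0:ℝ) < -r + s + w * (j : ℝ))
        push_cast at this ⊢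
        convert this using 2 <;> ring
  -- the Laurent tail bounds, generic
  have key_tail1 : ∀ B : ℝ, ∃ N : ℤ, ∀ j : ℤ, j ≤ N →
      (B : WithTop ℝ) < v (g j) + ((v₁ * j : ℝ) : WithTop ℝ) := by
    intro B
    obtain ⟨N, hN⟩ := ha.1 (B + r + v₁ * i₀)
    refine ⟨N - i₀, fun j hj => ?_⟩
    by_cases hj0 : j = 0
    · subst hj0
      simp only [hg, if_pos rfl]
      rw [(hv.1 0).2 rfl, top_add]
      exact WithTop.coe_lt_top B
    · rw [hgval j hj0]
      have hm := hN (j + i₀) (by omega)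
      rcases eq_or_ne (a (j + i₀)) 0 with h0 | h0
      · rw [h0, (hv.1 0).2 rfl, add_top, top_add]
        exact WithTop.coe_lt_top B
      · lift v (a (j + i₀)) to ℝ using hv.ne_top h0 with s hs
        have hm' : (B + r + v₁ * (i₀ : ℝ) : ℝ) < s + v₁ * ((j : ℝ) + (i₀ : ℝ)) := by
          have : ((B + r + v₁ * (i₀ : ℝ) : ℝ) : WithTop ℝ)
              < ((s + v₁ * ((j + i₀ : ℤ) : ℝ) : ℝ) : WithTop ℝ) := by
            push_cast
            push_cast at hm
            convert hm using 2
          push_cast at this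
          exact_mod_cast this
        have : ((B : ℝ) : WithTop ℝ) < ((-r + s + v₁ * (j : ℝ) : ℝ) : WithTop ℝ) := by
          exact_mod_cast (by nlinarith : (B:ℝ) < -r + s + v₁ * (j : ℝ))
        push_cast at this ⊢
        convert this using 2 <;> ring
  have key_tail2 : ∀ B : ℝ, ∃ N : ℤ, ∀ j : ℤ, N ≤ j →
      (B : WithTop ℝ) < v (g j) + ((v₂ * j : ℝ) : WithTop ℝ) := by
    intro B
    obtain ⟨N, hN⟩ := ha.2 (B + r + v₂ * i₀)
    refine ⟨N - i₀, fun j hj => ?_⟩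
    by_cases hj0 : j = 0
    · subst hj0
      simp only [hg, if_pos rfl]
      rw [(hv.1 0).2 rfl, top_add]
      exact WithTop.coe_lt_top B
    · rw [hgval j hj0]
      have hm := hN (j + i₀) (by omega)
      rcases eq_or_ne (a (j + i₀)) 0 with h0 | h0
      · rw [h0, (hv.1 0).2 rfl, add_top, top_add]
        exact WithTop.coe_lt_top B
      · lift v (a (j + i₀)) to ℝ using hv.ne_top h0 with s hs
        have hm' : (B + r + v₂ * (i₀ : ℝ) : ℝ) < s + v₂ * ((j : ℝ) + (i₀ : ℝ)) := by
          have : ((B + r + v₂ * (i₀ : ℝ) : ℝ) : WithTop ℝ)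
              < ((s + v₂ * ((j + i₀ : ℤ) : ℝ) : ℝ) : WithTop ℝ) := by
            push_cast
            push_cast at hm
            convert hm using 2
          push_cast at this
          exact_mod_cast this
        have : ((B : ℝ) : WithTop ℝ) < ((-r + s + v₂ * (j : ℝ) : ℝ) : WithTop ℝ) := by
          exact_mod_cast (by nlinarith : (B:ℝ) < -r + s + v₂ * (j : ℝ))
        push_cast at this ⊢
        convert this using 2 <;> ring
  refine ⟨g, ha0, ⟨key_tail1, key_tail2⟩, key_pos v₁ h1, key_pos v₂ h2, ?_, ?_⟩
  · intro i hi
    have hne : i - i₀ ≠ 0 := by omega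
    simp only [hg, if_neg hne, sub_add_cancel]
    rw [← mul_assoc, mul_inv_cancel₀ ha0, one_mul]
  · simp [hg]
end construct



/-- Characterisation of units on a closed annulus in terms of Newton polygons:
a Laurent coefficient sequence `a` admits a decomposition `h = c·t^d·(1+g)` iff for
`k = 1, 2` the quantity `v(aᵢ) + v_k·i` attains a strict minimum at a unique index
`i_k`, with `i₁ = i₂`.  Moreover, in that case `d = i₁` in any decomposition, and one
may take `c = a_d`. -/
theorem decomposition_iff_strict_min
    {K : Type*} [Field K] (v : K → WithTop ℝ) (hv : IsValuation v)
    (v₁ v₂ : ℝ) (h12 : v₂ ≤ v₁) (a : ℤ → K) (ha : IsLaurentSeq v v₁ v₂ a) :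
    ((∃ c d g, IsDecomposition v v₁ v₂ a c d g) ↔
      (∃ i₀ : ℤ,
        (∀ i : ℤ, i ≠ i₀ →
          v (a i₀) + ((v₁ * i₀ : ℝ) : WithTop ℝ) < v (a i) + ((v₁ * i : ℝ) : WithTop ℝ)) ∧
        (∀ i : ℤ, i ≠ i₀ →
          v (a i₀) + ((v₂ * i₀ : ℝ) : WithTop ℝ) < v (a i) + ((v₂ * i : ℝ) : WithTop ℝ)))) ∧
    (∀ c d g, IsDecomposition v v₁ v₂ a c d g →
      ∀ i₀ : ℤ,
        (∀ i : ℤ, i ≠ i₀ →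
          v (a i₀) + ((v₁ * i₀ : ℝ) : WithTop ℝ) < v (a i) + ((v₁ * i : ℝ) : WithTop ℝ)) →
        (∀ i : ℤ, i ≠ i₀ →
          v (a i₀) + ((v₂ * i₀ : ℝ) : WithTop ℝ) < v (a i) + ((v₂ * i : ℝ) : WithTop ℝ)) →
        d = i₀) ∧
    (∀ i₀ : ℤ,
      (∀ i : ℤ, i ≠ i₀ →
        v (a i₀) + ((v₁ * i₀ : ℝ) : WithTop ℝ) < v (a i) + ((v₁ * i : ℝ) : WithTop ℝ)) →
      (∀ i : ℤ, i ≠ i₀ →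
        v (a i₀) + ((v₂ * i₀ : ℝ) : WithTop ℝ) < v (a i) + ((v₂ * i : ℝ) : WithTop ℝ)) →
      ∃ g, IsDecomposition v v₁ v₂ a (a i₀) i₀ g) := by
  refine ⟨⟨?_, ?_⟩, ?_, ?_⟩
  · rintro ⟨c, d, g, hd⟩
    exact ⟨d, decomp_min hv hd v₁ hd.2.2.1, decomp_min hv hd v₂ hd.2.2.2.1⟩
  · rintro ⟨i₀, h1, h2⟩
    obtain ⟨g, hg⟩ := construct_decomp hv ha i₀ h1 h2
    exact ⟨a i₀, i₀, g, hg⟩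
  · intro c d g hd i₀ h1 h2
    by_contra hne
    have hmind := decomp_min hv hd v₁ hd.2.2.1
    exact lt_asymm (h1 d hne) (hmind i₀ (Ne.symm hne))
  · intro i₀ h1 h2
    exact construct_decomp hv ha i₀ h1 h2
end

section
/- Let K be a field equipped with a valuation v : K → ℝ ∪ {∞}, let v₂ ≤ v₁ be real numbers, and let a, ã : ℤ → K be Laurent coefficient sequences on the closed annulus with parameters (v₁, v₂). Let B₁, B₂ be real numbers with v(a_i − ã_i) + v_k·i ≥ B_k for all i ∈ ℤ and k ∈ {1,2}. Suppose ã admits a decomposition (c, d, g̃), and suppose that v(c) + v_k·d < B_k for k = 1, 2. Then a admits a decomposition (c, d, g) with the same c and d, where g satisfies v(g_i − g̃_i) + v_k·i ≥ B_k − v(c) − v_k·d for all i ∈ ℤ and k ∈ {1,2}. -/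
/-- Decomposition of an approximated unit: if `ã` represents `a` to precision
`(B₁, B₂)`, `ã` has a decomposition `(c, d, g̃)`, and `v(c) + v_k·d < B_k` for
`k = 1, 2`, then `a` has a decomposition `(c, d, g)` with the same `c` and `d`, where
`g` is represented by `g̃` to precision `(B₁ − v(c) − v₁·d, B₂ − v(c) − v₂·d)`. -/
theorem decomposition_of_approximation
    {K : Type*} [Field K] (v : K → WithTop ℝ) (hv : IsValuation v)
    (v₁ v₂ : ℝ) (h12 : v₂ ≤ v₁)
    (a atil : ℤ → K)
    (ha : IsLaurentSeq v v₁ v₂ a) (hatil : IsLaurentSeq v v₁ v₂ atil)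
    (B₁ B₂ : ℝ)
    (hB₁ : ∀ i : ℤ,
      (B₁ : WithTop ℝ) ≤ v (a i - atil i) + ((v₁ * i : ℝ) : WithTop ℝ))
    (hB₂ : ∀ i : ℤ,
      (B₂ : WithTop ℝ) ≤ v (a i - atil i) + ((v₂ * i : ℝ) : WithTop ℝ))
    (c : K) (d : ℤ) (gtil : ℤ → K)
    (hdec : IsDecomposition v v₁ v₂ atil c d gtil)
    (vc : ℝ) (hvc : v c = (vc : WithTop ℝ))
    (h₁ : vc + v₁ * d < B₁) (h₂ : vc + v₂ * d < B₂) :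
    ∃ g : ℤ → K, IsDecomposition v v₁ v₂ a c d g ∧
      (∀ i : ℤ, ((B₁ - vc - v₁ * d : ℝ) : WithTop ℝ) ≤
        v (g i - gtil i) + ((v₁ * i : ℝ) : WithTop ℝ)) ∧
      (∀ i : ℤ, ((B₂ - vc - v₂ * d : ℝ) : WithTop ℝ) ≤
        v (g i - gtil i) + ((v₂ * i : ℝ) : WithTop ℝ)) := by
  obtain ⟨hvtop, hmul, hadd⟩ := hv
  obtain ⟨hc, hgl, hg1, hg2, hrep, hd0⟩ := hdec
  have h1 : v (1 : K) = 0 := by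
    have h := hmul 1 1
    rw [mul_one] at h
    cases hx : v (1 : K) with
    | top => exact absurd ((hvtop 1).1 hx) one_ne_zero
    | coe t =>
      rw [hx, ← WithTop.coe_add] at h
      have : t = t + t := by exact_mod_cast h
      have : t = 0 := by linarith
      rw [this]; rfl
  have hinv : v c⁻¹ = ((-vc : ℝ) : WithTop ℝ) := by
    have h := hmul c c⁻¹
    rw [mul_inv_cancel₀ hc, h1, hvc] at h
    cases hx : v c⁻¹ with
    | top => rw [hx, WithTop.add_top] at h; exact absurd h (by simp)
    | coe t =>
      rw [hx, ← WithTop.coe_add] at h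
      have h' : (0 : ℝ) = vc + t := by exact_mod_cast h
      have : t = -vc := by linarith
      rw [this]
  have hdivv : ∀ x : K, v (x / c) = v x + ((-vc : ℝ) : WithTop ℝ) := by
    intro x; rw [div_eq_mul_inv, hmul, hinv]
  set g : ℤ → K := fun i => if i = 0 then a d / c - 1 else a (i + d) / c with hgdef
  have hg0 : g 0 = a d / c - 1 := rfl
  have hgne : ∀ i : ℤ, i ≠ 0 → g i = a (i + d) / c := by
    intro i hi; simp only [hgdef, if_neg hi]
  have hdiffeq : ∀ i : ℤ, g i - gtil i = (a (i + d) - atil (i + d)) / c := by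
    intro i
    by_cases h0 : i = 0
    · subst h0
      rw [hg0, zero_add, hd0]
      field_simp
      ring
    · rw [hgne i h0, hrep (i + d) (by omega), show i + d - d = i from by ring]
      field_simp
  have hd1 : ∀ i : ℤ, ((B₁ - vc - v₁ * d : ℝ) : WithTop ℝ) ≤
      v (g i - gtil i) + ((v₁ * i : ℝ) : WithTop ℝ) := by
    intro i
    rw [hdiffeq i, hdivv]
    have h := hB₁ (i + d)
    cases hx : v (a (i + d) - atil (i + d)) with
    | top => simp
    | coe t =>
      rw [hx, ← WithTop.coe_add, WithTop.coe_le_coe] at h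
      rw [← WithTop.coe_add, ← WithTop.coe_add, WithTop.coe_le_coe]
      push_cast at h ⊢
      ring_nf at h ⊢
      linarith
  have hd2 : ∀ i : ℤ, ((B₂ - vc - v₂ * d : ℝ) : WithTop ℝ) ≤
      v (g i - gtil i) + ((v₂ * i : ℝ) : WithTop ℝ) := by
    intro i
    rw [hdiffeq i, hdivv]
    have h := hB₂ (i + d)
    cases hx : v (a (i + d) - atil (i + d)) with
    | top => simp
    | coe t =>
      rw [hx, ← WithTop.coe_add, WithTop.coe_le_coe] at h
      rw [← WithTop.coe_add, ← WithTop.coe_add, WithTop.coe_le_coe]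
      push_cast at h ⊢
      ring_nf at h ⊢
      linarith
  have hmin : ∀ i : ℤ, min (v (gtil i)) (v (g i - gtil i)) ≤ v (g i) := by
    intro i
    have h := hadd (gtil i) (g i - gtil i)
    rwa [show gtil i + (g i - gtil i) = g i from by ring] at h
  have hpos1 : ∀ i : ℤ, (0 : WithTop ℝ) < v (g i) + ((v₁ * i : ℝ) : WithTop ℝ) := by
    intro i
    have h11 := hg1 i
    have h12 : (0 : WithTop ℝ) < v (g i - gtil i) + ((v₁ * i : ℝ) : WithTop ℝ) := by
      refine lt_of_lt_of_le ?_ (hd1 i)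
      exact_mod_cast show (0 : ℝ) < B₁ - vc - v₁ * d by linarith
    have h := add_le_add_left (hmin i) ((v₁ * i : ℝ) : WithTop ℝ)
    rcases min_cases (v (gtil i)) (v (g i - gtil i)) with ⟨heq, _⟩ | ⟨heq, _⟩ <;>
      rw [heq] at h
    · exact lt_of_lt_of_le h11 h
    · exact lt_of_lt_of_le h12 h
  have hpos2 : ∀ i : ℤ, (0 : WithTop ℝ) < v (g i) + ((v₂ * i : ℝ) : WithTop ℝ) := by
    intro i
    have h11 := hg2 i
    have h12 : (0 : WithTop ℝ) < v (g i - gtil i) + ((v₂ * i : ℝ) : WithTop ℝ) := by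
      refine lt_of_lt_of_le ?_ (hd2 i)
      exact_mod_cast show (0 : ℝ) < B₂ - vc - v₂ * d by linarith
    have h := add_le_add_left (hmin i) ((v₂ * i : ℝ) : WithTop ℝ)
    rcases min_cases (v (gtil i)) (v (g i - gtil i)) with ⟨heq, _⟩ | ⟨heq, _⟩ <;>
      rw [heq] at h
    · exact lt_of_lt_of_le h11 h
    · exact lt_of_lt_of_le h12 h
  refine ⟨g, ⟨hc, ⟨?_, ?_⟩, hpos1, hpos2, ?_, ?_⟩, hd1, hd2⟩
  · intro B
    obtain ⟨N, hN⟩ := ha.1 (B + vc + v₁ * d)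
    refine ⟨min (N - d) (-1), fun i hi => ?_⟩
    have hi0 : i ≠ 0 := by omega
    rw [hgne i hi0, hdivv]
    have h := hN (i + d) (by omega)
    cases hx : v (a (i + d)) with
    | top => simp
    | coe t =>
      rw [hx, ← WithTop.coe_add, WithTop.coe_lt_coe] at h
      rw [← WithTop.coe_add, ← WithTop.coe_add, WithTop.coe_lt_coe]
      push_cast at h ⊢
      ring_nf at h ⊢
      linarith
  · intro B
    obtain ⟨N, hN⟩ := ha.2 (B + vc + v₂ * d)
    refine ⟨max (N - d) 1, fun i hi => ?_⟩
    have hi0 : i ≠ 0 := by omega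
    rw [hgne i hi0, hdivv]
    have h := hN (i + d) (by omega)
    cases hx : v (a (i + d)) with
    | top => simp
    | coe t =>
      rw [hx, ← WithTop.coe_add, WithTop.coe_lt_coe] at h
      rw [← WithTop.coe_add, ← WithTop.coe_add, WithTop.coe_lt_coe]
      push_cast at h ⊢
      ring_nf at h ⊢
      linarith
  · intro i hi
    rw [hgne (i - d) (by omega), show i - d + d = i from by ring]
    field_simp
  · rw [hg0]
    field_simp
    ring
end

section
/- Let K be a complete nonarchimedean normed field of characteristic zero whose norm satisfies ‖2‖ = 1, and for i ∈ ℕ let binom(−1/2, i) ∈ ℚ denote the generalized binomial coefficient (∏_{j=0}^{i−1}(−1/2 − j))/i!, regarded as an element of K via the canonical embedding of ℚ. Then for every x ∈ K with ‖x‖ < 1, the series Σ_{i≥0} binom(−1/2, i)·xⁱ converges to an element y ∈ K satisfying y²·(1 + x) = 1, and for every k ∈ ℕ the truncation error satisfies ‖y − Σ_{i=0}^{k} binom(−1/2, i)·xⁱ‖ ≤ ‖x‖^{k+1}. -/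
/-- The generalized binomial coefficient `binom(-1/2, i)` as a rational number. -/
def binomHalf (i : ℕ) : ℚ :=
  (∏ j ∈ Finset.range i, (-(1 : ℚ)/2 - j)) / (Nat.factorial i)

lemma binomHalf_zero : binomHalf 0 = 1 := by simp [binomHalf]

lemma binomHalf_succ (i : ℕ) :
    ((i : ℚ) + 1) * binomHalf (i + 1) = (-(1:ℚ)/2 - i) * binomHalf i := by
  unfold binomHalf
  rw [Finset.prod_range_succ, Nat.factorial_succ]
  have h1 : ((Nat.factorial i : ℚ)) ≠ 0 := Nat.cast_ne_zero.2 (Nat.factorial_ne_zero i)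
  have h2 : ((i : ℚ) + 1) ≠ 0 := by positivity
  push_cast
  field_simp

lemma binomHalf_central (i : ℕ) :
    binomHalf i * 4 ^ i = (-1) ^ i * (Nat.centralBinom i : ℚ) := by
  induction i with
  | zero => simp [binomHalf_zero, Nat.centralBinom]
  | succ n ih =>
    have h2 : ((n : ℚ) + 1) ≠ 0 := by positivity
    apply mul_left_cancel₀ h2
    have hrec := binomHalf_succ n
    have hcb : ((n : ℚ) + 1) * (Nat.centralBinom (n + 1) : ℚ) =
        2 * (2 * n + 1) * (Nat.centralBinom n : ℚ) := by
      have := Nat.succ_mul_centralBinom_succ n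
      exact_mod_cast congrArg (fun m : ℕ => (m : ℚ)) this
    calc ((n : ℚ) + 1) * (binomHalf (n+1) * 4 ^ (n+1))
        = (((n : ℚ) + 1) * binomHalf (n+1)) * (4 * 4 ^ n) := by ring
      _ = ((-(1:ℚ)/2 - n) * binomHalf n) * (4 * 4 ^ n) := by rw [hrec]
      _ = (-(2 * (2 * n + 1))) * (binomHalf n * 4 ^ n) := by ring
      _ = (-(2 * (2 * n + 1))) * ((-1) ^ n * (Nat.centralBinom n : ℚ)) := by rw [ih]
      _ = (-1) ^ (n+1) * (2 * (2 * n + 1) * (Nat.centralBinom n : ℚ)) := by ring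
      _ = ((n : ℚ) + 1) * ((-1) ^ (n+1) * (Nat.centralBinom (n+1) : ℚ)) := by
          rw [← hcb]; ring

lemma twoT (m : ℕ) :
    2 * ∑ i ∈ Finset.range (m+1), (i : ℚ) * (binomHalf i * binomHalf (m - i)) =
      (m : ℚ) * ∑ i ∈ Finset.range (m+1), binomHalf i * binomHalf (m - i) := by
  have hrefl : ∑ i ∈ Finset.range (m+1), (i : ℚ) * (binomHalf i * binomHalf (m - i)) =
      ∑ i ∈ Finset.range (m+1), ((m - i : ℕ) : ℚ) * (binomHalf i * binomHalf (m - i)) := by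
    rw [← Finset.sum_range_reflect (fun i => (i : ℚ) * (binomHalf i * binomHalf (m - i))) (m+1)]
    refine Finset.sum_congr rfl fun i hi => ?_
    have hi' : i ≤ m := Nat.lt_succ_iff.mp (Finset.mem_range.mp hi)
    have h1 : m + 1 - 1 - i = m - i := by omega
    have h2 : m - (m - i) = i := by omega
    rw [h1, h2, mul_comm (binomHalf (m - i))]
  calc 2 * ∑ i ∈ Finset.range (m+1), (i : ℚ) * (binomHalf i * binomHalf (m - i))
      = ∑ i ∈ Finset.range (m+1), (i : ℚ) * (binomHalf i * binomHalf (m - i))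
        + ∑ i ∈ Finset.range (m+1), ((m - i : ℕ) : ℚ) * (binomHalf i * binomHalf (m - i)) := by
        rw [← hrefl]; ring
    _ = ∑ i ∈ Finset.range (m+1), ((i : ℚ) + ((m - i : ℕ) : ℚ)) * (binomHalf i * binomHalf (m - i)) := by
        rw [← Finset.sum_add_distrib]; refine Finset.sum_congr rfl fun i hi => ?_; ring
    _ = (m : ℚ) * ∑ i ∈ Finset.range (m+1), binomHalf i * binomHalf (m - i) := by
        rw [Finset.mul_sum]; refine Finset.sum_congr rfl fun i hi => ?_
        have hi' : i ≤ m := Nat.lt_succ_iff.mp (Finset.mem_range.mp hi)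
        have : ((m - i : ℕ) : ℚ) = (m : ℚ) - i := by
          push_cast [Nat.cast_sub hi']; ring
        rw [this]; ring

lemma binomHalf_conv (n : ℕ) :
    ∑ i ∈ Finset.range (n+1), binomHalf i * binomHalf (n - i) = (-1 : ℚ) ^ n := by
  induction n with
  | zero => simp [binomHalf_zero]
  | succ n ih =>
    have h2 : ((n : ℚ) + 1) ≠ 0 := by positivity
    apply mul_left_cancel₀ h2
    have hT : ∑ i ∈ Finset.range (n+2), (i : ℚ) * (binomHalf i * binomHalf (n + 1 - i)) =
        ∑ i ∈ Finset.range (n+1), (-(1:ℚ)/2 - i) * (binomHalf i * binomHalf (n - i)) := by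
      rw [Finset.sum_range_succ' (fun i => (i : ℚ) * (binomHalf i * binomHalf (n + 1 - i))) (n+1)]
      simp only [Nat.cast_zero, zero_mul, add_zero]
      refine Finset.sum_congr rfl fun i hi => ?_
      have h1 : n + 1 - (i + 1) = n - i := by omega
      have hrec := binomHalf_succ i
      push_cast
      calc ((i : ℚ) + 1) * (binomHalf (i+1) * binomHalf (n - i))
          = (((i : ℚ) + 1) * binomHalf (i+1)) * binomHalf (n - i) := by ring
        _ = ((-(1:ℚ)/2 - i) * binomHalf i) * binomHalf (n - i) := by rw [hrec]
        _ = (-(1:ℚ)/2 - i) * (binomHalf i * binomHalf (n - i)) := by ring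
    have key : ((n : ℚ) + 1) * ∑ i ∈ Finset.range (n+2), binomHalf i * binomHalf (n + 1 - i)
        = -(((n : ℚ) + 1) * ∑ i ∈ Finset.range (n+1), binomHalf i * binomHalf (n - i)) := by
      have e1 := twoT (n+1)
      have e2 := twoT n
      push_cast at e1
      rw [hT] at e1
      have hsplit : ∑ i ∈ Finset.range (n+1), (-(1:ℚ)/2 - i) * (binomHalf i * binomHalf (n - i))
          = -(1/2) * (∑ i ∈ Finset.range (n+1), binomHalf i * binomHalf (n - i))
            - ∑ i ∈ Finset.range (n+1), (i : ℚ) * (binomHalf i * binomHalf (n - i)) := by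
        rw [Finset.mul_sum, ← Finset.sum_sub_distrib]
        refine Finset.sum_congr rfl fun i hi => ?_; ring
      rw [hsplit] at e1
      linarith [e1, e2]
    rw [key, ih]
    ring

lemma na_norm_natCast_le_one {K : Type*} [NormedField K]
    (hna : IsNonarchimedean (fun t : K => ‖t‖)) (n : ℕ) : ‖(n : K)‖ ≤ 1 := by
  induction n with
  | zero => simp
  | succ n ih =>
    push_cast
    refine le_trans (hna (n : K) 1) ?_
    simp [ih]

lemma na_norm_binomHalf_le {K : Type*} [NormedField K] [CharZero K]
    (hna : IsNonarchimedean (fun t : K => ‖t‖)) (h2 : ‖(2 : K)‖ = 1) (i : ℕ) :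
    ‖((binomHalf i : ℚ) : K)‖ ≤ 1 := by
  have hq := binomHalf_central i
  have hK : ((binomHalf i : ℚ) : K) * (4 : K) ^ i =
      (-1 : K) ^ i * (Nat.centralBinom i : K) := by
    exact_mod_cast congrArg (fun q : ℚ => (q : K)) hq
  have h4 : ‖(4 : K)‖ = 1 := by
    have : (4 : K) = 2 * 2 := by norm_num
    rw [this, norm_mul, h2]; norm_num
  have hl : ‖((binomHalf i : ℚ) : K)‖ = ‖((binomHalf i : ℚ) : K) * (4 : K) ^ i‖ := by
    rw [norm_mul, norm_pow, h4, one_pow, mul_one]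
  rw [hl, hK, norm_mul, norm_pow, norm_neg, norm_one, one_pow, one_mul]
  exact na_norm_natCast_le_one hna _

lemma na_norm_sum_le {K : Type*} [NormedField K]
    (hna : IsNonarchimedean (fun t : K => ‖t‖)) {ι : Type*} (s : Finset ι) (g : ι → K)
    {C : ℝ} (hC : 0 ≤ C) (h : ∀ i, ‖g i‖ ≤ C) : ‖∑ i ∈ s, g i‖ ≤ C := by
  induction s using Finset.cons_induction with
  | empty => simpa using hC
  | cons a s ha ih =>
    rw [Finset.sum_cons]
    exact le_trans (hna _ _) (max_le (h a) ih)

lemma na_norm_tsum_le {K : Type*} [NormedField K]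
    (hna : IsNonarchimedean (fun t : K => ‖t‖)) (g : ℕ → K) (hg : Summable g)
    {C : ℝ} (hC : 0 ≤ C) (h : ∀ i, ‖g i‖ ≤ C) : ‖∑' i, g i‖ ≤ C := by
  have := hg.hasSum
  refine le_of_tendsto' (Filter.Tendsto.comp (continuous_norm.continuousAt) this) ?_
  intro s
  exact na_norm_sum_le hna s g hC h

/-- Binomial series for the inverse square root over a complete nonarchimedean normed
field with `‖2‖ = 1`: for `‖x‖ < 1` the series `Σ binom(-1/2,i)·xⁱ` converges to a `y`
with `y²(1+x) = 1`, and truncating after the `xᵏ` term incurs an error of norm at most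
`‖x‖^(k+1)`. -/
theorem inverse_sqrt_binomial_series
    {K : Type*} [NormedField K] [CompleteSpace K] [CharZero K]
    (hna : IsNonarchimedean (fun t : K => ‖t‖))
    (h2 : ‖(2 : K)‖ = 1)
    (x : K) (hx : ‖x‖ < 1) :
    ∃ y : K, HasSum (fun i : ℕ => ((binomHalf i : ℚ) : K) * x ^ i) y ∧
      y ^ 2 * (1 + x) = 1 ∧
      ∀ k : ℕ,
        ‖y - ∑ i ∈ Finset.range (k + 1), ((binomHalf i : ℚ) : K) * x ^ i‖ ≤
          ‖x‖ ^ (k + 1) := by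
  set f : ℕ → K := fun i => ((binomHalf i : ℚ) : K) * x ^ i with hf
  have hxnn : (0 : ℝ) ≤ ‖x‖ := norm_nonneg x
  have hnormf : ∀ i, ‖f i‖ ≤ ‖x‖ ^ i := by
    intro i
    rw [hf]
    simp only
    rw [norm_mul, norm_pow]
    calc ‖((binomHalf i : ℚ) : K)‖ * ‖x‖ ^ i ≤ 1 * ‖x‖ ^ i := by
          exact mul_le_mul_of_nonneg_right (na_norm_binomHalf_le hna h2 i) (by positivity)
      _ = ‖x‖ ^ i := one_mul _
  have hsumnorm : Summable fun i => ‖f i‖ := by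
    refine Summable.of_nonneg_of_le (fun i => norm_nonneg _) hnormf ?_
    exact summable_geometric_of_lt_one hxnn hx
  have hsum : Summable f := hsumnorm.of_norm
  refine ⟨∑' i, f i, hsum.hasSum, ?_, ?_⟩
  · -- y ^ 2 * (1 + x) = 1
    have hx1 : (1 : K) + x ≠ 0 := by
      intro h
      have : x = -1 := by linear_combination h
      rw [this] at hx; simp at hx
    have hmul : (∑' i, f i) * (∑' i, f i) =
        ∑' n, ∑ kl ∈ Finset.HasAntidiagonal.antidiagonal n, f kl.1 * f kl.2 :=
      tsum_mul_tsum_eq_tsum_sum_antidiagonal_of_summable_norm hsumnorm hsumnorm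
    have hinner : ∀ n : ℕ, ∑ kl ∈ Finset.HasAntidiagonal.antidiagonal n, f kl.1 * f kl.2 = (-x) ^ n := by
      intro n
      rw [Finset.Nat.sum_antidiagonal_eq_sum_range_succ_mk]
      have : ∀ i ∈ Finset.range (n+1), f i * f (n - i) =
          ((binomHalf i * binomHalf (n - i) : ℚ) : K) * x ^ n := by
        intro i hi
        have hi' : i ≤ n := Nat.lt_succ_iff.mp (Finset.mem_range.mp hi)
        rw [hf]
        simp only
        push_cast
        rw [show ((binomHalf i : ℚ) : K) * x ^ i * (((binomHalf (n-i) : ℚ) : K) * x ^ (n - i))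
          = ((binomHalf i : ℚ) : K) * ((binomHalf (n-i) : ℚ) : K) * (x ^ i * x ^ (n - i)) by ring,
          ← pow_add, show i + (n - i) = n by omega]
      rw [Finset.sum_congr rfl this, ← Finset.sum_mul]
      have : (∑ i ∈ Finset.range (n+1), ((binomHalf i * binomHalf (n - i) : ℚ) : K))
          = ((-1 : K)) ^ n := by
        rw [← Rat.cast_sum]
        rw [binomHalf_conv n]
        push_cast; ring
      rw [this, neg_pow]
      ring
    have hgeo : (∑' n : ℕ, (-x) ^ n) = (1 - (-x))⁻¹ :=
      tsum_geometric_of_norm_lt_one (by rwa [norm_neg])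
    have h1x : (1 : K) - (-x) = 1 + x := by ring
    have hy2 : (∑' i, f i) ^ 2 = (1 + x)⁻¹ := by
      rw [sq, hmul]
      rw [tsum_congr hinner, hgeo, h1x]
    rw [hy2, inv_mul_cancel₀ hx1]
  · -- tail bound
    intro k
    have htail := Summable.sum_add_tsum_nat_add (f := f) (k + 1) hsum
    have hdiff : (∑' i, f i) - ∑ i ∈ Finset.range (k + 1), f i = ∑' i, f (i + (k + 1)) := by
      rw [← htail]; ring
    rw [hdiff]
    refine na_norm_tsum_le hna _ ((summable_nat_add_iff (k+1)).2 hsum) (by positivity) ?_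
    intro i
    refine le_trans (hnormf (i + (k+1))) ?_
    exact pow_le_pow_of_le_one hxnn hx.le (by omega)
end

section
/- Let f : Γ → Γ' be a finite morphism of metrised graphs, harmonic with local degrees d : V(Γ) → ℤ, and suppose that f is surjective on vertices and on edges, that every vertex of Γ' is the source of at least one oriented edge, and that Γ' is connected (any two vertices of Γ' are joined by a finite path of oriented edges). Then the quantity Σ_{v : f(v)=v'} d(v) is independent of the vertex v' ∈ V(Γ'); that is, for all vertices v'₁, v'₂ of Γ' one has Σ_{v : f(v)=v'₁} d(v) = Σ_{v : f(v)=v'₂} d(v). -/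
open Finset

/-- Well-definedness of the degree of a harmonic morphism: if `f : Γ → Γ'` is a finite
morphism of metrised graphs, harmonic with local degrees `d`, surjective on vertices
and edges, with every vertex of `Γ'` the source of some edge and `Γ'` connected, then
`Σ_{f(v) = v'} d v` is independent of the vertex `v'` of `Γ'`. -/
theorem degree_well_defined
    {V E V' E' : Type} [Fintype V] [Fintype E] [Fintype V'] [Fintype E']
    [DecidableEq V] [DecidableEq E] [DecidableEq V'] [DecidableEq E']
    (G : MetrisedGraph V E) (G' : MetrisedGraph V' E')
    (f : G.FiniteMorphism G') (d : V → ℤ)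
    (hharm : f.IsHarmonic d)
    (hsurjV : Function.Surjective f.onV)
    (hsurjE : Function.Surjective f.onE)
    (hout : ∀ v' : V', ∃ e' : E', G'.src e' = v')
    (hconn : ∀ v w : V',
      Relation.ReflTransGen
        (fun a b => ∃ e' : E', G'.src e' = a ∧ G'.src (G'.inv e') = b) v w) :
    ∀ v'₁ v'₂ : V',
      ∑ v ∈ Finset.univ.filter (fun v => f.onV v = v'₁), d v =
      ∑ v ∈ Finset.univ.filter (fun v => f.onV v = v'₂), d v := by
  -- degE is invariant under the involution
  have hdegE_inv : ∀ e : E, f.degE (G.inv e) = f.degE e := by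
    intro e
    have h1 : G'.len (f.onE (G.inv e)) = (f.degE (G.inv e) : ℝ) * G.len (G.inv e) :=
      f.degE_spec _
    rw [f.inv_comm, G'.len_inv, G.len_inv, f.degE_spec e] at h1
    have h2 : (f.degE e : ℝ) = f.degE (G.inv e) :=
      mul_right_cancel₀ (G.len_pos e).ne' h1
    exact_mod_cast h2.symm
  -- key lemma: fibre sum of d over src e' equals sum of degE over fibre of e'
  have key : ∀ e' : E',
      ∑ v ∈ Finset.univ.filter (fun v => f.onV v = G'.src e'), d v =
      ∑ e ∈ Finset.univ.filter (fun e => f.onE e = e'), f.degE e := by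
    intro e'
    rw [← Finset.sum_fiberwise (Finset.univ.filter (fun e => f.onE e = e')) G.src f.degE]
    rw [Finset.sum_filter]
    apply Finset.sum_congr rfl
    intro v _
    by_cases hv : f.onV v = G'.src e'
    · rw [if_pos hv]
      have := hharm v e' hv.symm
      rw [← this]
      congr 1
      ext e
      simp only [Finset.mem_filter, Finset.mem_univ, true_and]
      tauto
    · rw [if_neg hv]
      rw [Finset.filter_filter]
      symm
      apply Finset.sum_eq_zero
      intro e he
      simp only [Finset.mem_filter, Finset.mem_univ, true_and] at he
      exact absurd (by rw [← he.2, f.src_comm, he.1]) hv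
  -- adjacent vertices have equal fibre sums
  have adj : ∀ a b : V', (∃ e' : E', G'.src e' = a ∧ G'.src (G'.inv e') = b) →
      ∑ v ∈ Finset.univ.filter (fun v => f.onV v = a), d v =
      ∑ v ∈ Finset.univ.filter (fun v => f.onV v = b), d v := by
    rintro a b ⟨e', rfl, rfl⟩
    rw [key e', key (G'.inv e')]
    apply Finset.sum_nbij' (fun e => G.inv e) (fun e => G.inv e)
    · intro e he
      simp only [Finset.mem_filter, Finset.mem_univ, true_and] at he ⊢
      rw [f.inv_comm, he]
    · intro e he
      simp only [Finset.mem_filter, Finset.mem_univ, true_and] at he ⊢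
      have : f.onE (G.inv e) = G'.inv (G'.inv e') := by rw [f.inv_comm, he]
      rw [G'.inv_inv] at this
      exact this
    · intro e _; exact G.inv_inv e
    · intro e _; exact G.inv_inv e
    · intro e _; exact (hdegE_inv e).symm
  intro v'₁ v'₂
  induction hconn v'₁ v'₂ with
  | refl => rfl
  | tail _ h ih => rw [ih, adj _ _ h]
end
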